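/- (Additivity of reach probabilities over disjoint closed sets, used in the proof of Theorem 1.) Let R_1, …, R_p ⊆ S be pairwise disjoint closed sets and let s0 ∈ S. Then μ_{s0}{ω : ω reaches R_1 ∪ ⋯ ∪ R_p} = ∑_{k=1}^{p} μ_{s0}{ω : ω reaches R_k}. -/

import Mathlib

open MeasureTheory Finset Set
open scoped Classical

/-- `μ` is the path measure of the time-homogeneous Markov chain with transition
matrix `P` started at `s0`: it assigns to each finite cylinder the product of
transition probabilities. -/
def IsPathMeasure {S : Type*} [Fintype S] [DecidableEq S] [MeasurableSpace S]
    (P : S → S → ℝ) (s0 : S) (μ : Measure (ℕ → S)) : Prop :=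
  ∀ (n : ℕ) (f : ℕ → S),
    μ {ω | ∀ i ≤ n, ω i = f i} =
      if f 0 = s0 then ENNReal.ofReal (∏ i ∈ Finset.range n, P (f i) (f (i + 1))) else 0

/-- `s'` is accessible from `s`: some matrix power of `P` has positive `(s, s')` entry. -/
def Accessible {S : Type*} [Fintype S] [DecidableEq S] (P : S → S → ℝ) (s s' : S) : Prop :=
  ∃ n : ℕ, 0 < ((Matrix.of P) ^ n) s s'

/-- `C` is a closed set of the chain: from any state of `C`, the chain stays in `C`. -/
def IsClosedSet {S : Type*} [Fintype S] (P : S → S → ℝ) (C : Set S) : Prop :=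
  ∀ s ∈ C, ∑ s' ∈ Finset.univ.filter (· ∈ C), P s s' = 1

/-- A closed communicating class: a nonempty closed set all of whose states
communicate with each other. -/
def IsCCC {S : Type*} [Fintype S] [DecidableEq S] (P : S → S → ℝ) (C : Set S) : Prop :=
  C.Nonempty ∧ IsClosedSet P C ∧ ∀ s ∈ C, ∀ s' ∈ C, Accessible P s s'

lemma no_escape_entry {S : Type*} [Fintype S]
    (P : S → S → ℝ) (hP0 : ∀ s s', 0 ≤ P s s') (hP1 : ∀ s, ∑ s', P s s' = 1)
    {C : Set S} (hC : IsClosedSet P C) {s s' : S} (hs : s ∈ C) (hs' : s' ∉ C) :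
    P s s' = 0 := by
  have h := hC s hs
  have htot := hP1 s
  have hsplit : ∑ t ∈ Finset.univ.filter (· ∈ C), P s t
      + ∑ t ∈ Finset.univ.filter (fun t => ¬ t ∈ C), P s t = ∑ t, P s t :=
    Finset.sum_filter_add_sum_filter_not Finset.univ (· ∈ C) _
  have hzero : ∑ t ∈ Finset.univ.filter (fun t => ¬ t ∈ C), P s t = 0 := by linarith
  exact (Finset.sum_eq_zero_iff_of_nonneg (fun t _ => hP0 s t)).1 hzero s' (by simp [hs'])

lemma cyl_null {S : Type*} [Fintype S] [DecidableEq S] [MeasurableSpace S]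
    (P : S → S → ℝ) (hP0 : ∀ s s', 0 ≤ P s s') (hP1 : ∀ s, ∑ s', P s s' = 1)
    (s0 : S) (μ : Measure (ℕ → S)) (hμ : IsPathMeasure P s0 μ)
    {C : Set S} (hC : IsClosedSet P C) {m n : ℕ} (hmn : m ≤ n)
    (f : ℕ → S) (hm : f m ∈ C) (hn : f n ∉ C) :
    μ {ω | ∀ i ≤ n, ω i = f i} = 0 := by
  rw [hμ n f]
  have hk : ∃ k, m ≤ k ∧ k < n ∧ f k ∈ C ∧ f (k + 1) ∉ C := by
    by_contra hcon
    push_neg at hcon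
    have hall : ∀ j, m ≤ j → j ≤ n → f j ∈ C := by
      intro j
      induction j with
      | zero => intro h1 _; have hm0 : m = 0 := Nat.le_zero.1 h1; rw [← hm0]; exact hm
      | succ j ih =>
        intro h1 h2
        rcases Nat.lt_or_ge m (j+1) with h | h
        · have hj : m ≤ j := by omega
          have := ih hj (by omega)
          by_contra hnot
          exact hnot (hcon j hj (by omega) this)
        · have : m = j + 1 := by omega
          rw [← this]; exact hm
    exact hn (hall n hmn le_rfl)
  obtain ⟨k, hk1, hk2, hk3, hk4⟩ := hk
  have : ∏ i ∈ Finset.range n, P (f i) (f (i + 1)) = 0 :=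
    Finset.prod_eq_zero (Finset.mem_range.2 hk2)
      (no_escape_entry P hP0 hP1 hC hk3 hk4)
  rw [this]
  simp

lemma event_null {S : Type*} [Fintype S] [DecidableEq S] [MeasurableSpace S]
    (P : S → S → ℝ) (hP0 : ∀ s s', 0 ≤ P s s') (hP1 : ∀ s, ∑ s', P s s' = 1)
    (s0 : S) (μ : Measure (ℕ → S)) (hμ : IsPathMeasure P s0 μ)
    {C : Set S} (hC : IsClosedSet P C) {m n : ℕ} (hmn : m ≤ n) :
    μ {ω : ℕ → S | ω m ∈ C ∧ ω n ∉ C} = 0 := by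
  have hsub : {ω : ℕ → S | ω m ∈ C ∧ ω n ∉ C} ⊆
      ⋃ g : {g : Fin (n+1) → S // g ⟨m, by omega⟩ ∈ C ∧ g ⟨n, by omega⟩ ∉ C},
        {ω : ℕ → S | ∀ i ≤ n, ω i = (fun j => (g : Fin (n+1) → S) ⟨min j n, by omega⟩) i} := by
    intro ω hω
    refine Set.mem_iUnion.2 ⟨⟨fun j => ω j, ?_, ?_⟩, ?_⟩
    · simpa using hω.1
    · simpa using hω.2
    · intro i hi
      simp [Nat.min_eq_left hi]
  refine measure_mono_null hsub (measure_iUnion_null fun g => ?_)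
  refine cyl_null P hP0 hP1 s0 μ hμ hC hmn _ ?_ ?_
  · simpa [Nat.min_eq_left hmn] using g.2.1
  · simpa using g.2.2

/-- Additivity of reach probabilities over pairwise disjoint closed sets. -/
theorem reach_prob_additive_over_disjoint_closed_sets
    {S : Type*} [Fintype S] [Nonempty S] [DecidableEq S]
    [MeasurableSpace S] [MeasurableSingletonClass S]
    (P : S → S → ℝ) (hP0 : ∀ s s', 0 ≤ P s s') (hP1 : ∀ s, ∑ s', P s s' = 1)
    (p : ℕ) (R : Fin p → Set S)
    (hdisj : Pairwise fun i j => Disjoint (R i) (R j))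
    (hclosed : ∀ i, IsClosedSet P (R i))
    (s0 : S) (μ : Measure (ℕ → S)) [IsProbabilityMeasure μ]
    (hμ : IsPathMeasure P s0 μ) :
    μ {ω | ∃ n, ω n ∈ ⋃ i, R i} = ∑ i : Fin p, μ {ω | ∃ n, ω n ∈ R i} := by
  have hset : {ω : ℕ → S | ∃ n, ω n ∈ ⋃ i, R i} = ⋃ i, {ω : ℕ → S | ∃ n, ω n ∈ R i} := by
    ext ω
    simp only [Set.mem_setOf_eq, Set.mem_iUnion]
    tauto
  rw [hset]
  have hmeas : ∀ i, MeasurableSet {ω : ℕ → S | ∃ n, ω n ∈ R i} := by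
    intro i
    have : {ω : ℕ → S | ∃ n, ω n ∈ R i} = ⋃ n, (fun ω : ℕ → S => ω n) ⁻¹' (R i) := by
      ext ω; simp [Set.mem_iUnion]
    rw [this]
    exact MeasurableSet.iUnion fun n => (measurable_pi_apply n) ((R i).toFinite.measurableSet)
  have hae : Pairwise (Function.onFun (AEDisjoint μ) fun i => {ω : ℕ → S | ∃ n, ω n ∈ R i}) := by
    intro i j hij
    have hsub : {ω : ℕ → S | ∃ n, ω n ∈ R i} ∩ {ω : ℕ → S | ∃ n, ω n ∈ R j} ⊆
        ⋃ m : ℕ, ⋃ n : ℕ, {ω : ℕ → S | ω m ∈ R i ∧ ω n ∈ R j} := by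
      rintro ω ⟨⟨m, hm⟩, ⟨n, hn⟩⟩
      exact Set.mem_iUnion.2 ⟨m, Set.mem_iUnion.2 ⟨n, hm, hn⟩⟩
    refine measure_mono_null hsub (measure_iUnion_null fun m => measure_iUnion_null fun n => ?_)
    rcases le_or_gt m n with h | h
    · refine measure_mono_null ?_ (event_null P hP0 hP1 s0 μ hμ (hclosed i) h)
      rintro ω ⟨h1, h2⟩
      exact ⟨h1, fun hin => (hdisj hij).ne_of_mem hin h2 rfl⟩
    · refine measure_mono_null ?_ (event_null P hP0 hP1 s0 μ hμ (hclosed j) h.le)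
      rintro ω ⟨h1, h2⟩
      exact ⟨h2, fun hin => (hdisj hij).ne_of_mem h1 hin rfl⟩
  rw [measure_iUnion₀ hae fun i => (hmeas i).nullMeasurableSet, tsum_fintype]
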